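/- Let D be a real m × p matrix, x ∈ ℝᵖ, β > 0, and λ > 0. If (u_λ, γ_λ) minimizes the penalized split objective L_{β,λ}(u, γ) = (1/2)‖u − x‖₂² + β‖Du − γ‖₂² + λ‖γ‖₁ over ℝᵖ × ℝᵐ, then ‖u_λ − x‖₂² ≤ 2λ‖Dx‖₁ and ‖Du_λ − γ_λ‖₂² ≤ λ‖Dx‖₁ / β. Consequently, as λ → 0⁺ the minimizers (u_λ, γ_λ) converge to (x, Dx), the global minimizer of the split objective L_β. -/

import Mathlib

open Matrix Filter

private lemma aux_sq_tendsto {α : Type*} {l : Filter α} {f : α → ℝ} {a : ℝ}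
    (h : Tendsto (fun t => (f t - a) ^ 2) l (nhds 0)) : Tendsto f l (nhds a) := by
  rw [tendsto_iff_dist_tendsto_zero]
  have h2 : Tendsto (fun t => Real.sqrt ((f t - a) ^ 2)) l (nhds (Real.sqrt 0)) := h.sqrt
  simpa [Real.sqrt_sq_eq_abs, Real.dist_eq] using h2

/-- Minimizers of the penalized split objective satisfy `‖u_λ − x‖₂² ≤ 2λ‖Dx‖₁` and
`‖Du_λ − γ_λ‖₂² ≤ λ‖Dx‖₁/β`; consequently `(u_λ, γ_λ) → (x, Dx)` as `λ → 0⁺`. -/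
theorem stmt_14 {m p : ℕ} (D : Matrix (Fin m) (Fin p) ℝ) (x : Fin p → ℝ)
    (β : ℝ) (hβ : 0 < β)
    (uf : ℝ → Fin p → ℝ) (γf : ℝ → Fin m → ℝ)
    (hmin : ∀ lam > (0 : ℝ), ∀ (u : Fin p → ℝ) (γ : Fin m → ℝ),
      (1/2) * ∑ i, (uf lam i - x i) ^ 2 +
          β * ∑ j, (D.mulVec (uf lam) j - γf lam j) ^ 2 + lam * ∑ j, |γf lam j| ≤
        (1/2) * ∑ i, (u i - x i) ^ 2 +
          β * ∑ j, (D.mulVec u j - γ j) ^ 2 + lam * ∑ j, |γ j|) :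
    (∀ lam > (0 : ℝ),
      ∑ i, (uf lam i - x i) ^ 2 ≤ 2 * lam * ∑ j, |D.mulVec x j| ∧
      ∑ j, (D.mulVec (uf lam) j - γf lam j) ^ 2 ≤ lam * (∑ j, |D.mulVec x j|) / β) ∧
    Tendsto (fun lam => (uf lam, γf lam)) (nhdsWithin 0 (Set.Ioi 0))
      (nhds (x, D.mulVec x)) := by
  set C := ∑ j, |D.mulVec x j| with hCdef
  have hC0 : 0 ≤ C := Finset.sum_nonneg fun j _ => abs_nonneg _
  have key : ∀ lam > (0 : ℝ),
      ∑ i, (uf lam i - x i) ^ 2 ≤ 2 * lam * C ∧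
      ∑ j, (D.mulVec (uf lam) j - γf lam j) ^ 2 ≤ lam * C / β := by
    intro lam hlam
    have h := hmin lam hlam x (D.mulVec x)
    simp only [sub_self] at h
    have hA : 0 ≤ ∑ i, (uf lam i - x i) ^ 2 :=
      Finset.sum_nonneg fun _ _ => sq_nonneg _
    have hB : 0 ≤ ∑ j, (D.mulVec (uf lam) j - γf lam j) ^ 2 :=
      Finset.sum_nonneg fun _ _ => sq_nonneg _
    have hE : 0 ≤ ∑ j, |γf lam j| :=
      Finset.sum_nonneg fun _ _ => abs_nonneg _
    have h' : (1/2) * ∑ i, (uf lam i - x i) ^ 2 +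
        β * ∑ j, (D.mulVec (uf lam) j - γf lam j) ^ 2 ≤ lam * C := by
      have := mul_nonneg hlam.le hE
      simp only [mul_zero, Finset.sum_const_zero, ne_eq, OfNat.ofNat_ne_zero,
        not_false_eq_true, zero_pow] at h
      nlinarith
    refine ⟨by nlinarith [mul_nonneg hβ.le hB], ?_⟩
    rw [le_div_iff₀ hβ]
    nlinarith
  refine ⟨key, ?_⟩
  have hlim : Tendsto (fun lam : ℝ => lam * C) (nhdsWithin 0 (Set.Ioi 0)) (nhds 0) := by
    have : Tendsto (fun lam : ℝ => lam * C) (nhds 0) (nhds 0) := by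
      simpa using (continuous_mul_const C).tendsto (0 : ℝ)
    exact this.mono_left nhdsWithin_le_nhds
  have hAsum : Tendsto (fun lam => ∑ i, (uf lam i - x i) ^ 2)
      (nhdsWithin 0 (Set.Ioi 0)) (nhds 0) := by
    refine squeeze_zero' ?_ ?_ (by simpa [two_mul, mul_assoc] using (hlim.const_mul 2))
    · filter_upwards with lam using Finset.sum_nonneg fun _ _ => sq_nonneg _
    · filter_upwards [self_mem_nhdsWithin] with lam hlam
      exact (key lam hlam).1.trans_eq (by ring)
  have hBsum : Tendsto (fun lam => ∑ j, (D.mulVec (uf lam) j - γf lam j) ^ 2)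
      (nhdsWithin 0 (Set.Ioi 0)) (nhds 0) := by
    refine squeeze_zero' (g := fun lam => lam * C / β) ?_ ?_ ?_
    · filter_upwards with lam using Finset.sum_nonneg fun _ _ => sq_nonneg _
    · filter_upwards [self_mem_nhdsWithin] with lam hlam
      exact (key lam hlam).2
    · simpa using hlim.div_const β
  have hu : ∀ i, Tendsto (fun lam => uf lam i) (nhdsWithin 0 (Set.Ioi 0)) (nhds (x i)) := by
    intro i
    apply aux_sq_tendsto
    refine squeeze_zero (fun lam => sq_nonneg _) (fun lam => ?_) hAsum
    exact Finset.single_le_sum (fun k _ => sq_nonneg ((uf lam k - x k))) (Finset.mem_univ i)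
  have hDu : ∀ j, Tendsto (fun lam => D.mulVec (uf lam) j)
      (nhdsWithin 0 (Set.Ioi 0)) (nhds (D.mulVec x j)) := by
    intro j
    simp only [Matrix.mulVec, dotProduct]
    exact tendsto_finset_sum _ fun i _ => (hu i).const_mul (D j i)
  have hdiff : ∀ j, Tendsto (fun lam => D.mulVec (uf lam) j - γf lam j)
      (nhdsWithin 0 (Set.Ioi 0)) (nhds 0) := by
    intro j
    apply aux_sq_tendsto
    simp only [sub_zero]
    refine squeeze_zero (fun lam => sq_nonneg _) (fun lam => ?_) hBsum
    exact Finset.single_le_sum (f := fun k => (D.mulVec (uf lam) k - γf lam k) ^ 2) (fun k _ => sq_nonneg _) (Finset.mem_univ j)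
  have hγ : ∀ j, Tendsto (fun lam => γf lam j) (nhdsWithin 0 (Set.Ioi 0))
      (nhds (D.mulVec x j)) := by
    intro j
    have := (hDu j).sub (hdiff j)
    simpa using this
  exact (tendsto_pi_nhds.2 hu).prodMk_nhds (tendsto_pi_nhds.2 hγ)
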